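/- arXiv:1605.08402 — 2 statements merged into one kernel-verified Lean document; each statement's English description precedes it below -/
import Mathlib

section
/- If T : X → Φ(H) is a continuous family of Fredholm operators on a Hilbert space H parametrized by a compact topological space X, then there exists a finite dimensional subspace V ⊆ H such that im(T_λ) + V = H for all λ ∈ X. -/
/-- A bounded operator is Fredholm if its kernel is finite dimensional and its image is
closed and of finite codimension. -/
def IsFredholm {𝕜 E : Type*} [RCLike 𝕜] [NormedAddCommGroup E] [NormedSpace 𝕜 E]
    (T : E →L[𝕜] E) : Prop :=
  FiniteDimensional 𝕜 (LinearMap.ker (T : E →ₗ[𝕜] E)) ∧ IsClosed (LinearMap.range (T : E →ₗ[𝕜] E) : Set E) ∧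
    FiniteDimensional 𝕜 (E ⧸ LinearMap.range (T : E →ₗ[𝕜] E))

open Function Metric Set

/-- Stability of surjectivity for continuous linear maps between Banach spaces. -/
lemma surjective_stable {E F : Type*} [NormedAddCommGroup E] [NormedSpace ℂ E]
    [NormedAddCommGroup F] [NormedSpace ℂ F] [CompleteSpace E] [CompleteSpace F]
    (f : E →L[ℂ] F) (hf : Function.Surjective f) :
    ∃ ε > 0, ∀ g : E →L[ℂ] F, ‖g - f‖ < ε → Function.Surjective g := by
  have hrange : LinearMap.range (f : E →ₗ[ℂ] F) = ⊤ := LinearMap.range_eq_top.2 hf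
  set fsymm := f.nonlinearRightInverseOfSurjective hrange with hfs
  have hN : 0 < (fsymm.nnnorm : ℝ) := f.nonlinearRightInverseOfSurjective_nnnorm_pos hrange
  refine ⟨(fsymm.nnnorm : ℝ)⁻¹, inv_pos.2 hN, fun g hg => ?_⟩
  set c : NNReal := ‖g - f‖₊ with hc
  have hcN : (c : ℝ) < (fsymm.nnnorm : ℝ)⁻¹ := hg
  have happrox : ApproximatesLinearOn g f Set.univ c := by
    intro x _ y _
    have : g x - g y - f (x - y) = (g - f) (x - y) := by
      simp only [ContinuousLinearMap.sub_apply, map_sub]; abel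
    rw [this]
    exact (g - f).le_opNorm _
  intro y
  have hpos : 0 < (fsymm.nnnorm : ℝ)⁻¹ - (c : ℝ) := by linarith
  set r : ℝ := dist y (g 0) / ((fsymm.nnnorm : ℝ)⁻¹ - (c : ℝ)) with hr
  have hr0 : 0 ≤ r := div_nonneg dist_nonneg hpos.le
  have hsurj := happrox.surjOn_closedBall_of_nonlinearRightInverse fsymm hr0
    (Set.subset_univ (closedBall 0 r))
  have hy : y ∈ closedBall (g 0) (((fsymm.nnnorm : ℝ)⁻¹ - c) * r) := by
    rw [mem_closedBall, hr]
    rw [mul_div_cancel₀ _ hpos.ne']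
  obtain ⟨x, -, hx⟩ := hsurj hy
  exact ⟨x, hx⟩

/-- If `T : X → Φ(H)` is a continuous family of Fredholm operators on a
separable complex Hilbert space `H` (with the norm topology), parametrized by a compact
topological space `X`, then there exists a finite dimensional subspace `V ⊆ H` with
`im(T_λ) + V = H` for all `λ ∈ X`. -/
theorem stmt_6
    {H : Type*} [NormedAddCommGroup H] [InnerProductSpace ℂ H] [CompleteSpace H]
    [TopologicalSpace.SeparableSpace H]
    {X : Type*} [TopologicalSpace X] [CompactSpace X]
    (T : X → H →L[ℂ] H) (hcont : Continuous T) (hFred : ∀ lam : X, IsFredholm (T lam)) :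
    ∃ V : Submodule ℂ H, FiniteDimensional ℂ V ∧
      ∀ lam : X, LinearMap.range (T lam : H →ₗ[ℂ] H) ⊔ V = ⊤ := by
  -- the candidate local complements
  set W : X → Submodule ℂ H := fun lam => (LinearMap.range (T lam : H →ₗ[ℂ] H))ᗮ with hW
  have hclosed : ∀ lam, IsClosed (LinearMap.range (T lam : H →ₗ[ℂ] H) : Set H) := fun lam => (hFred lam).2.1
  have hcompl : ∀ lam, IsCompl (LinearMap.range (T lam : H →ₗ[ℂ] H)) (W lam) := by
    intro lam
    haveI : CompleteSpace (LinearMap.range (T lam : H →ₗ[ℂ] H)) := (hclosed lam).completeSpace_coe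
    exact Submodule.isCompl_orthogonal_of_hasOrthogonalProjection
  have hWfd : ∀ lam, FiniteDimensional ℂ (W lam) := by
    intro lam
    haveI := (hFred lam).2.2
    exact Module.Finite.equiv
      (Submodule.quotientEquivOfIsCompl _ _ (hcompl lam))
  -- the combined operator whose surjectivity is `range ⊔ V = ⊤`
  have key : ∀ (V : Submodule ℂ H) (S : H →L[ℂ] H),
      LinearMap.range (((S.comp (ContinuousLinearMap.fst ℂ H V)
        + V.subtypeL.comp (ContinuousLinearMap.snd ℂ H V) : H × V →L[ℂ] H)) : H × V →ₗ[ℂ] H) = LinearMap.range (S : H →ₗ[ℂ] H) ⊔ V := by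
    intro V S
    apply le_antisymm
    · rintro _ ⟨⟨x, v⟩, rfl⟩
      exact Submodule.add_mem_sup (LinearMap.mem_range_self _ x) v.2
    · refine sup_le ?_ ?_
      · rintro _ ⟨x, rfl⟩
        exact ⟨(x, 0), by simp⟩
      · intro v hv
        exact ⟨(0, ⟨v, hv⟩), by simp⟩
  -- local stability
  have hloc : ∀ lam : X, ∃ U : Set X, IsOpen U ∧ lam ∈ U ∧
      ∀ mu ∈ U, LinearMap.range (T mu : H →ₗ[ℂ] H) ⊔ W lam = ⊤ := by
    intro lam
    haveI : FiniteDimensional ℂ (W lam) := hWfd lam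
    set Phi : (H →L[ℂ] H) → (H × W lam) →L[ℂ] H := fun S =>
      S.comp (ContinuousLinearMap.fst ℂ H (W lam))
        + (W lam).subtypeL.comp (ContinuousLinearMap.snd ℂ H (W lam)) with hPhi
    have hsurjlam : Function.Surjective (Phi (T lam)) := by
      apply (LinearMap.range_eq_top (f := (Phi (T lam) : H × W lam →ₗ[ℂ] H))).1
      rw [key]
      exact (hcompl lam).sup_eq_top
    obtain ⟨ε, hε, hstab⟩ := surjective_stable (Phi (T lam)) hsurjlam
    refine ⟨{mu | ‖T mu - T lam‖ < ε}, ?_, by simpa using hε, fun mu hmu => ?_⟩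
    · exact isOpen_lt (by fun_prop) continuous_const
    · have hdiff : ‖Phi (T mu) - Phi (T lam)‖ ≤ ‖T mu - T lam‖ := by
        refine ContinuousLinearMap.opNorm_le_bound _ (norm_nonneg _) fun p => ?_
        have : (Phi (T mu) - Phi (T lam)) p = (T mu - T lam) p.1 := by
          simp [hPhi]
        rw [this]
        exact ((T mu - T lam).le_opNorm p.1).trans
          (mul_le_mul_of_nonneg_left (norm_fst_le p) (norm_nonneg _))
      have := hstab (Phi (T mu)) (lt_of_le_of_lt hdiff hmu)
      have := (LinearMap.range_eq_top (f := (Phi (T mu) : H × W lam →ₗ[ℂ] H))).2 this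
      rw [key] at this
      exact this
  choose U hUopen hUmem hUprop using hloc
  obtain ⟨t, ht⟩ := isCompact_univ.elim_finite_subcover U hUopen
    (fun x _ => Set.mem_iUnion.2 ⟨x, hUmem x⟩)
  refine ⟨t.sup W, Submodule.finiteDimensional_finset_sup t W, fun lam => ?_⟩
  obtain ⟨i, hit, hlam⟩ : ∃ i ∈ t, lam ∈ U i := by
    simpa using ht (Set.mem_univ lam)
  rw [eq_top_iff, ← hUprop i lam hlam]
  exact sup_le_sup le_rfl (Finset.le_sup hit)
end

section
/- Let X be a compact Hausdorff space. If the Čech cohomology group Ȟᵏ(X; G) is nonzero for some abelian group G and some k ≥ 0, then the covering dimension of X is at least k. -/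
/-- A (not necessarily finite) open cover of a topological space. -/
structure OpenCover (X : Type) [TopologicalSpace X] where
  ι : Type
  U : ι → Set X
  isOpen : ∀ i, IsOpen (U i)
  covers : ∀ x : X, ∃ i, x ∈ U i

variable {X : Type} [TopologicalSpace X]

/-- The `n`-simplices of the nerve of an open cover: `(n+1)`-tuples of indices whose
members have a common point. -/
def NerveSimplex (𝒰 : OpenCover X) (n : ℕ) : Type :=
  {σ : Fin (n + 1) → 𝒰.ι // (⋂ j, 𝒰.U (σ j)).Nonempty}

/-- Čech `n`-cochains of a cover with coefficients in `G`. -/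
def CechCochain (𝒰 : OpenCover X) (G : Type) [AddCommGroup G] (n : ℕ) : Type :=
  NerveSimplex 𝒰 n → G

instance (𝒰 : OpenCover X) (G : Type) [AddCommGroup G] (n : ℕ) :
    AddCommGroup (CechCochain 𝒰 G n) := Pi.addCommGroup

/-- The Čech coboundary operator. -/
def cechCoboundary (𝒰 : OpenCover X) (G : Type) [AddCommGroup G] (n : ℕ)
    (f : CechCochain 𝒰 G n) : CechCochain 𝒰 G (n + 1) :=
  fun σ => ∑ j : Fin (n + 2), (-1 : ℤ) ^ (j : ℕ) •
    f ⟨σ.1 ∘ j.succAbove, by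
      obtain ⟨x, hx⟩ := σ.2
      exact ⟨x, Set.mem_iInter.2 fun i => Set.mem_iInter.1 hx _⟩⟩

/-- Restriction of cochains along a refinement map. -/
def cechRestrict {𝒰 𝒱 : OpenCover X} (r : 𝒱.ι → 𝒰.ι) (hr : ∀ j, 𝒱.U j ⊆ 𝒰.U (r j))
    (G : Type) [AddCommGroup G] (n : ℕ) (f : CechCochain 𝒰 G n) : CechCochain 𝒱 G n :=
  fun σ => f ⟨r ∘ σ.1, by
    obtain ⟨x, hx⟩ := σ.2
    exact ⟨x, Set.mem_iInter.2 fun i => hr _ (Set.mem_iInter.1 hx i)⟩⟩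

/-- A cochain is a coboundary if it is `δ` of a cochain of one degree lower (in degree `0`
this means that it is zero). -/
def IsCechCoboundary (𝒰 : OpenCover X) (G : Type) [AddCommGroup G] :
    (k : ℕ) → CechCochain 𝒰 G k → Prop
  | 0, f => f = 0
  | (n + 1), f => ∃ g : CechCochain 𝒰 G n, cechCoboundary 𝒰 G n g = f

/-- The Čech cohomology `Ȟᵏ(X; G)`: cocycles on some open cover, where two cocycles are
identified whenever their restrictions to a common refinement differ by a coboundary. -/
def CechCohomology (X : Type) [TopologicalSpace X] (G : Type) [AddCommGroup G]
    (k : ℕ) : Type _ :=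
  Quot (fun a b : Σ 𝒰 : OpenCover X, {f : CechCochain 𝒰 G k // cechCoboundary 𝒰 G k f = 0} =>
    ∃ (𝒲 : OpenCover X) (r : 𝒲.ι → a.1.ι) (hr : ∀ j, 𝒲.U j ⊆ a.1.U (r j))
      (s : 𝒲.ι → b.1.ι) (hs : ∀ j, 𝒲.U j ⊆ b.1.U (s j)),
      IsCechCoboundary 𝒲 G k (cechRestrict r hr G k a.2.1 - cechRestrict s hs G k b.2.1))

/-- `X` has covering dimension at most `n`: every finite open cover admits a finite open
refinement in which no point lies in more than `n+1` sets. -/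
def CovDimLE (X : Type) [TopologicalSpace X] (n : ℕ) : Prop :=
  ∀ (ι : Type) (U : ι → Set X), Finite ι → (∀ i, IsOpen (U i)) → (∀ x : X, ∃ i, x ∈ U i) →
    ∃ (κ : Type) (V : κ → Set X), Finite κ ∧ (∀ j, IsOpen (V j)) ∧
      (∀ x : X, ∃ j, x ∈ V j) ∧ (∀ j, ∃ i, V j ⊆ U i) ∧
      ∀ x : X, {j | x ∈ V j}.ncard ≤ n + 1

namespace Stmt16
noncomputable section
open Finsupp

variable {N : ℕ}

abbrev Tup (N m : ℕ) := Fin (m + 1) → Fin N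
abbrev Ch (N m : ℕ) := Tup N m →₀ ℤ

def sing {m : ℕ} (τ : Tup N m) : Ch N m := Finsupp.single τ 1

def clift {m m' : ℕ} (φ : Tup N m → Ch N m') : Ch N m →ₗ[ℤ] Ch N m' :=
  Finsupp.lift _ ℤ _ φ

@[simp] lemma clift_sing {m m' : ℕ} (φ : Tup N m → Ch N m') (τ : Tup N m) :
    clift φ (sing τ) = φ τ := by
  simp [clift, sing]

lemma chain_ext {m m' : ℕ} {f g : Ch N m →ₗ[ℤ] Ch N m'}
    (h : ∀ τ, f (sing τ) = g (sing τ)) : f = g := by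
  refine Finsupp.lhom_ext' fun τ => LinearMap.ext_ring ?_
  simpa [sing, Finsupp.lsingle_apply] using h τ

def bd (m : ℕ) : Ch N (m + 1) →ₗ[ℤ] Ch N m :=
  clift fun σ => ∑ j : Fin (m + 2), ((-1 : ℤ) ^ (j : ℕ)) • sing (σ ∘ Fin.succAbove j)

@[simp] lemma bd_sing (m : ℕ) (σ : Tup N (m + 1)) :
    bd m (sing σ) = ∑ j : Fin (m + 2), ((-1 : ℤ) ^ (j : ℕ)) • sing (σ ∘ Fin.succAbove j) := by
  simp [bd]

def cone (v : Fin N) (m : ℕ) : Ch N m →ₗ[ℤ] Ch N (m + 1) :=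
  clift fun τ => sing (Fin.cons v τ)

@[simp] lemma cone_sing (v : Fin N) (m : ℕ) (τ : Tup N m) :
    cone v m (sing τ) = sing (Fin.cons v τ) := by simp [cone]

lemma succAbove_succAbove {n : ℕ} (i j : Fin (n + 2)) (h : i ≤ j) (x : Fin (n + 1)) :
    (j.succ).succAbove (i.succAbove x) = (i.castSucc).succAbove (j.succAbove x) := by
  rcases i with ⟨i, hi⟩
  rcases j with ⟨j, hj⟩
  rcases x with ⟨x, hx⟩
  simp only [Fin.succAbove, Fin.lt_def, Fin.le_def] at *
  split_ifs <;> simp_all [Fin.ext_iff, Fin.castSucc, Fin.castAdd, Fin.castLE, Fin.succ] <;> omega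

lemma cons_comp_succAbove {n : ℕ} (v : Fin N) (τ : Tup N n) (j : Fin (n + 1)) :
    (Fin.cons v τ : Fin (n + 2) → Fin N) ∘ (j.succ).succAbove = Fin.cons v (τ ∘ j.succAbove) := by
  funext x
  induction x using Fin.cases with
  | zero => simp [Fin.succ_succAbove_zero]
  | succ x => simp [Fin.succ_succAbove_succ]

lemma cons_comp_succ {n : ℕ} (v : Fin N) (τ : Tup N n) :
    (Fin.cons v τ : Fin (n + 2) → Fin N) ∘ Fin.succ = τ := by
  funext x; simp

/-- the cone boundary formula -/
lemma bd_cone (v : Fin N) (m : ℕ) (c : Ch N (m + 1)) :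
    bd (m + 1) (cone v (m + 1) c) = c - cone v m (bd m c) := by
  have : (bd (m + 1)).comp (cone v (m + 1)) =
      (LinearMap.id : Ch N (m+1) →ₗ[ℤ] Ch N (m+1)) - (cone v m).comp (bd m) := by
    apply chain_ext
    intro τ
    simp only [LinearMap.comp_apply, cone_sing, bd_sing, LinearMap.sub_apply, LinearMap.id_apply]
    rw [Fin.sum_univ_succ]
    simp only [Fin.val_zero, pow_zero, one_smul, Fin.succAbove_zero]
    rw [cons_comp_succ v τ]
    have : ∀ j : Fin (m + 2), (Fin.cons v τ : Fin (m + 3) → Fin N) ∘ (Fin.succAbove j.succ)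
        = Fin.cons v (τ ∘ j.succAbove) := fun j => cons_comp_succAbove v τ j
    rw [Finset.sum_congr rfl (fun j _ => by rw [this j])]
    rw [map_sum]
    simp only [map_smul, cone_sing]
    have hsum : ∑ j : Fin (m + 2), ((-1 : ℤ) ^ ((j.succ : Fin (m+3)) : ℕ)) • sing (Fin.cons v (τ ∘ j.succAbove))
        = - ∑ j : Fin (m + 2), ((-1 : ℤ) ^ (j : ℕ)) • sing (Fin.cons v (τ ∘ j.succAbove)) := by
      rw [← Finset.sum_neg_distrib]
      refine Finset.sum_congr rfl fun j _ => ?_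
      rw [Fin.val_succ, pow_succ]
      rw [← neg_smul]
      ring_nf
    rw [hsum]
    abel
  have := LinearMap.congr_fun this c
  simpa using this

lemma pair_cancel {M : Type} [AddCommGroup M] (m : ℕ) (N : ℕ) (σ : Fin (m + 3) → Fin N)
    (s : (Fin (m + 1) → Fin N) → M) :
    ∑ p : Fin (m + 3) × Fin (m + 2),
      (((-1 : ℤ) ^ (p.1 : ℕ) * (-1 : ℤ) ^ (p.2 : ℕ)) •
        s (σ ∘ p.1.succAbove ∘ p.2.succAbove)) = 0 := by
  set f : Fin (m + 3) × Fin (m + 2) → M := fun p =>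
    ((-1 : ℤ) ^ (p.1 : ℕ) * (-1 : ℤ) ^ (p.2 : ℕ)) • s (σ ∘ p.1.succAbove ∘ p.2.succAbove) with hf
  set g : Fin (m + 3) × Fin (m + 2) → Fin (m + 3) × Fin (m + 2) := fun p =>
      if h : (p.2 : ℕ) < (p.1 : ℕ) then
        (⟨(p.2 : ℕ), by have := p.2.isLt; omega⟩, ⟨(p.1 : ℕ) - 1, by have := p.1.isLt; omega⟩)
      else
        (⟨(p.2 : ℕ) + 1, by have := p.2.isLt; omega⟩, ⟨(p.1 : ℕ), by
          have h2 := p.2.isLt; omega⟩) with hg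
  have key1 : ∀ (J' : Fin (m + 2)) (I : Fin (m + 2)), (I : ℕ) ≤ (J' : ℕ) →
      f (J'.succ, I) + f (I.castSucc, J') = 0 := by
    intro J' I hle
    have htup : σ ∘ (J'.succ).succAbove ∘ I.succAbove
        = σ ∘ (I.castSucc).succAbove ∘ J'.succAbove := by
      funext x
      exact congrArg σ (succAbove_succAbove I J' (by rwa [Fin.le_def]) x)
    simp only [hf, htup, Fin.val_succ, Fin.coe_castSucc]
    rw [← add_smul]
    convert zero_smul ℤ _
    ring
  have hginv : ∀ p, g (g p) = p := by
    rintro ⟨J, I⟩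
    by_cases hlt : (I : ℕ) < (J : ℕ)
    · have h1 : g (J, I) = (⟨(I : ℕ), by have := I.isLt; omega⟩, ⟨(J : ℕ) - 1, by have := J.isLt; omega⟩) := by
        simp only [hg]; rw [dif_pos hlt]
      rw [h1]
      have h2 : ¬ (((J : ℕ) - 1 : ℕ) < (I : ℕ)) := by omega
      simp only [hg]
      rw [dif_neg h2]
      refine Prod.ext ?_ ?_ <;> simp [Fin.ext_iff] <;> omega
    · have h1 : g (J, I) = (⟨(I : ℕ) + 1, by have := I.isLt; omega⟩, ⟨(J : ℕ), by have := I.isLt; omega⟩) := by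
        simp only [hg]; rw [dif_neg hlt]
      rw [h1]
      have h2 : ((J : ℕ) < (I : ℕ) + 1) := by omega
      simp only [hg]
      rw [dif_pos h2]
      refine Prod.ext ?_ ?_ <;> simp [Fin.ext_iff] <;> omega
  have := Finset.sum_involution (g := fun p (_ : p ∈ Finset.univ) => g p) (f := f)
    (s := Finset.univ) ?_ ?_ (fun a ha => Finset.mem_univ _) (fun a ha => hginv a)
  · exact this
  · rintro ⟨J, I⟩ _
    show f (J, I) + f (g (J, I)) = 0
    by_cases hlt : (I : ℕ) < (J : ℕ)
    · obtain ⟨J', rfl⟩ : ∃ J' : Fin (m + 2), J = J'.succ :=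
        ⟨⟨(J : ℕ) - 1, by have := J.isLt; omega⟩, by rw [Fin.ext_iff]; simp; omega⟩
      have h1 : g (J'.succ, I) = ((I.castSucc : Fin (m + 3)), J') := by
        simp only [hg]; rw [dif_pos hlt]
        exact Prod.ext (by simp [Fin.ext_iff]) (by simp [Fin.ext_iff])
      rw [h1]
      refine key1 J' I ?_
      have := hlt; simp [Fin.val_succ] at this; omega
    · obtain ⟨J2, rfl⟩ : ∃ J2 : Fin (m + 2), J = J2.castSucc :=
        ⟨⟨(J : ℕ), by have h1' := J.isLt; have h2 := I.isLt; omega⟩, by simp [Fin.ext_iff]⟩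
      have h1 : g (J2.castSucc, I) = ((I.succ : Fin (m + 3)), J2) := by
        simp only [hg]; rw [dif_neg hlt]
        exact Prod.ext (by simp [Fin.ext_iff]) (by simp [Fin.ext_iff])
      rw [h1, add_comm]
      refine key1 I J2 ?_
      simp [Fin.coe_castSucc] at hlt; omega
  · rintro ⟨J, I⟩ _ hfne heq
    replace heq : g (J, I) = (J, I) := heq
    by_cases hlt : (I : ℕ) < (J : ℕ)
    · have h1 : g (J, I) = (⟨(I : ℕ), by have := I.isLt; omega⟩, ⟨(J : ℕ) - 1, by have := J.isLt; omega⟩) := by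
        simp only [hg]; rw [dif_pos hlt]
      rw [h1] at heq
      have := congrArg (fun q : Fin (m + 3) × Fin (m + 2) => (q.1 : ℕ)) heq
      simp at this; omega
    · have h1 : g (J, I) = (⟨(I : ℕ) + 1, by have := I.isLt; omega⟩, ⟨(J : ℕ), by have := I.isLt; omega⟩) := by
        simp only [hg]; rw [dif_neg hlt]
      rw [h1] at heq
      have := congrArg (fun q : Fin (m + 3) × Fin (m + 2) => (q.1 : ℕ)) heq
      simp at this; omega


lemma bd_bd (m : ℕ) (c : Ch N (m + 2)) : bd m (bd (m + 1) c) = 0 := by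
  have : (bd m).comp (bd (m + 1)) = (0 : Ch N (m + 2) →ₗ[ℤ] Ch N m) := by
    apply chain_ext
    intro σ
    simp only [LinearMap.comp_apply, bd_sing, LinearMap.zero_apply, map_sum, map_smul, bd_sing]
    rw [← pair_cancel m N σ sing]
    rw [Fintype.sum_prod_type]
    refine Finset.sum_congr rfl fun j _ => ?_
    rw [Finset.smul_sum]
    refine Finset.sum_congr rfl fun i _ => ?_
    rw [smul_smul]
    rfl
  exact LinearMap.congr_fun this c

/-! ### adjacent duplicates -/

def HasAdjDup {m : ℕ} (τ : Tup N m) : Prop := ∃ i : Fin m, τ i.castSucc = τ i.succ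

lemma succAbove_val {n : ℕ} (i : Fin (n + 1)) (x : Fin n) :
    ((i.succAbove x : Fin (n + 1)) : ℕ) = if (x : ℕ) < (i : ℕ) then (x : ℕ) else (x : ℕ) + 1 := by
  rcases i with ⟨i, hi⟩; rcases x with ⟨x, hx⟩
  simp only [Fin.succAbove, Fin.lt_def]
  split_ifs <;> simp_all [Fin.castSucc, Fin.castAdd, Fin.castLE, Fin.succ] <;> omega

lemma strictMono_of_no_adjDup {m : ℕ} {s : Tup N m} (hmono : Monotone s)
    (hdup : ¬ HasAdjDup s) : StrictMono s := by
  rw [Fin.strictMono_iff_lt_succ]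
  intro i
  rcases lt_or_eq_of_le (hmono (Fin.castSucc_lt_succ (i := i)).le) with h | h
  · exact h
  · exact absurd ⟨i, h⟩ hdup

lemma no_adjDup_of_strictMono {m : ℕ} {s : Tup N m} (h : StrictMono s) : ¬ HasAdjDup s := by
  rintro ⟨i, hi⟩
  exact absurd hi (ne_of_lt (h (Fin.castSucc_lt_succ (i := i))))

lemma hasAdjDup_of_mono_not_inj {m : ℕ} {s : Tup N m} (hmono : Monotone s)
    (hinj : ¬ Function.Injective s) : HasAdjDup s := by
  by_contra hdup
  exact hinj (strictMono_of_no_adjDup hmono hdup).injective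

/-- the two faces at a duplicate coincide -/
lemma face_dup_eq {m : ℕ} {s : Tup N (m + 1)} {i₀ : Fin (m + 1)}
    (h : s i₀.castSucc = s i₀.succ) :
    s ∘ (i₀.castSucc).succAbove = s ∘ (i₀.succ).succAbove := by
  funext x
  by_cases hx : (x : ℕ) = (i₀ : ℕ)
  · have h1 : (i₀.castSucc).succAbove x = i₀.succ := by
      rw [Fin.ext_iff, succAbove_val]
      simp [hx]
    have h2 : (i₀.succ).succAbove x = i₀.castSucc := by
      rw [Fin.ext_iff, succAbove_val]
      simp [hx]
    simp only [Function.comp_apply, h1, h2]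
    exact h.symm
  · have : (i₀.castSucc).succAbove x = (i₀.succ).succAbove x := by
      rw [Fin.ext_iff, succAbove_val, succAbove_val]
      have := x.isLt
      simp only [Fin.coe_castSucc, Fin.val_succ]
      split_ifs <;> omega
    simp only [Function.comp_apply, this]

/-- other faces keep an adjacent duplicate -/
lemma face_dup_other {m : ℕ} {s : Tup N (m + 1)} {i₀ : Fin (m + 1)}
    (h : s i₀.castSucc = s i₀.succ) (i : Fin (m + 2))
    (h1 : i ≠ i₀.castSucc) (h2 : i ≠ i₀.succ) : HasAdjDup (s ∘ i.succAbove) := by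
  have hi := i.isLt
  have hi₀ := i₀.isLt
  rcases lt_or_gt_of_ne (fun hv : (i : ℕ) = (i₀ : ℕ) => h1 (by rwa [Fin.ext_iff])) with hlt | hgt
  · -- (i : ℕ) < i₀ ; duplicate at i₀ - 1
    have hpos : 0 < (i₀ : ℕ) := by omega
    refine ⟨⟨(i₀ : ℕ) - 1, by omega⟩, ?_⟩
    have ha : i.succAbove (Fin.castSucc ⟨(i₀ : ℕ) - 1, by omega⟩) = i₀.castSucc := by
      rw [Fin.ext_iff, succAbove_val]
      simp only [Fin.coe_castSucc]
      split_ifs <;> omega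
    have hb : i.succAbove (Fin.succ ⟨(i₀ : ℕ) - 1, by omega⟩) = i₀.succ := by
      rw [Fin.ext_iff, succAbove_val]
      simp only [Fin.val_succ]
      split_ifs <;> omega
    simp only [Function.comp_apply, ha, hb, h]
  · -- i₀ + 1 < i
    have hgt' : (i₀ : ℕ) + 1 < (i : ℕ) := by
      rcases Nat.lt_or_ge ((i₀ : ℕ) + 1) (i : ℕ) with h' | h'
      · exact h'
      · exfalso; exact h2 (by rw [Fin.ext_iff, Fin.val_succ]; omega)
    refine ⟨⟨(i₀ : ℕ), by omega⟩, ?_⟩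
    have ha : i.succAbove (Fin.castSucc ⟨(i₀ : ℕ), by omega⟩) = i₀.castSucc := by
      rw [Fin.ext_iff, succAbove_val]
      simp only [Fin.coe_castSucc]
      split_ifs <;> omega
    have hb : i.succAbove (Fin.succ ⟨(i₀ : ℕ), by omega⟩) = i₀.succ := by
      rw [Fin.ext_iff, succAbove_val]
      simp only [Fin.val_succ]
      split_ifs <;> omega
    simp only [Function.comp_apply, ha, hb, h]

open scoped Classical

/-! ### the normalized sort chain map -/

def ZGen {m : ℕ} (τ : Tup N m) : Ch N m := if HasAdjDup τ then 0 else sing τ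

def PhiGen {m : ℕ} (σ : Tup N m) : Ch N m :=
  if HasAdjDup (σ ∘ Tuple.sort σ) then 0
  else ((Equiv.Perm.sign (Tuple.sort σ) : ℤˣ) : ℤ) • sing (σ ∘ Tuple.sort σ)

def Phi (m : ℕ) : Ch N m →ₗ[ℤ] Ch N m := clift PhiGen

@[simp] lemma Phi_sing {m : ℕ} (σ : Tup N m) : Phi m (sing σ) = PhiGen σ := by simp [Phi]

/-- boundary of a normalized generator of a monotone tuple -/
lemma bd_ZGen {m : ℕ} (s : Tup N (m + 1)) (hs : Monotone s) :
    bd m (ZGen s) = ∑ i : Fin (m + 2), ((-1 : ℤ) ^ (i : ℕ)) • ZGen (s ∘ i.succAbove) := by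
  by_cases hdup : HasAdjDup s
  · rw [ZGen, if_pos hdup, map_zero]
    obtain ⟨i₀, h₀⟩ := hdup
    have hzero : ∀ i : Fin (m + 2), i ∉ ({i₀.castSucc, i₀.succ} : Finset (Fin (m + 2))) →
        ((-1 : ℤ) ^ (i : ℕ)) • ZGen (s ∘ i.succAbove) = 0 := by
      intro i hi
      simp only [Finset.mem_insert, Finset.mem_singleton, not_or] at hi
      rw [ZGen, if_pos (face_dup_other h₀ i hi.1 hi.2), smul_zero]
    have hsub : ∑ i ∈ ({i₀.castSucc, i₀.succ} : Finset (Fin (m + 2))),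
          ((-1 : ℤ) ^ (i : ℕ)) • ZGen (s ∘ i.succAbove)
        = ∑ i : Fin (m + 2), ((-1 : ℤ) ^ (i : ℕ)) • ZGen (s ∘ i.succAbove) :=
      Finset.sum_subset (Finset.subset_univ _) (fun x _ hx => hzero x hx)
    rw [← hsub]
    rw [Finset.sum_pair (ne_of_lt (Fin.castSucc_lt_succ (i := i₀)))]
    rw [face_dup_eq h₀]
    rw [← add_smul]
    have hcoef : ((-1 : ℤ) ^ ((i₀.castSucc : Fin (m + 2)) : ℕ)) + ((-1 : ℤ) ^ ((i₀.succ : Fin (m + 2)) : ℕ)) = 0 := by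
      rw [Fin.coe_castSucc, Fin.val_succ, pow_succ]
      ring
    rw [hcoef, zero_smul]
  · rw [ZGen, if_neg hdup, bd_sing]
    have hsm : StrictMono s := strictMono_of_no_adjDup hs hdup
    refine Finset.sum_congr rfl fun i _ => ?_
    rw [ZGen, if_neg]
    exact no_adjDup_of_strictMono (hsm.comp (Fin.strictMono_succAbove i))

/-- factorization of the sort of a face of a tuple -/
lemma sort_face {N m : ℕ} (σ : Fin (m + 2) → Fin N) (j : Fin (m + 2)) :
    ((σ ∘ j.succAbove) ∘ (Tuple.sort (σ ∘ j.succAbove)) =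
      (σ ∘ Tuple.sort σ) ∘ Fin.succAbove ((Tuple.sort σ)⁻¹ j)) ∧
    ((Equiv.Perm.sign (Tuple.sort (σ ∘ j.succAbove)) : ℤ) =
      (Equiv.Perm.sign (Tuple.sort σ) : ℤ) * (-1) ^ (j : ℕ) *
        (-1) ^ ((((Tuple.sort σ)⁻¹ j) : Fin (m + 2)) : ℕ)) := by
  set π := Tuple.sort σ with hπ
  set i := π⁻¹ j with hi
  have hπi : π i = j := by simp [hi]
  -- the conjugated permutation fixing 0
  set π' : Equiv.Perm (Fin (m + 2)) := j.cycleRange * π * (i.cycleRange)⁻¹ with hπ'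
  have hπ'0 : π' 0 = 0 := by
    have : (i.cycleRange)⁻¹ 0 = i := by
      simp [Equiv.Perm.inv_def]
    simp [hπ', this, hπi, Fin.cycleRange_self, Equiv.Perm.mul_apply]
  set ρ : Equiv.Perm (Fin (m + 1)) := (Equiv.Perm.decomposeFin π').2 with hρ
  have hdec : Equiv.Perm.decomposeFin.symm (π' 0, ρ) = π' := by
    rw [hρ]
    have : (π' 0, (Equiv.Perm.decomposeFin π').2) = Equiv.Perm.decomposeFin π' := by
      have h0 : (Equiv.Perm.decomposeFin π').1 = π' 0 := by
        conv_rhs => rw [← Equiv.Perm.decomposeFin.symm_apply_apply π']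
        rcases h : Equiv.Perm.decomposeFin π' with ⟨p, e⟩
        rw [Equiv.Perm.decomposeFin_symm_apply_zero]
      rw [← h0]
    rw [this, Equiv.symm_apply_apply]
  have hsucc : ∀ x : Fin (m + 1), π' x.succ = (ρ x).succ := by
    intro x
    rw [← hdec, hπ'0, Equiv.Perm.decomposeFin_symm_apply_succ]
    simp
  -- key intertwining
  have hkey : ∀ x : Fin (m + 1), π (i.succAbove x) = j.succAbove (ρ x) := by
    intro x
    have h1 : i.succAbove x = (i.cycleRange)⁻¹ x.succ := by
      rw [Equiv.Perm.inv_def, ← Fin.cycleRange_symm_succ]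
    have h2 : π ((i.cycleRange)⁻¹ x.succ) = (j.cycleRange)⁻¹ (π' x.succ) := by
      simp [hπ', Equiv.Perm.mul_apply]
    rw [h1, h2, hsucc, Equiv.Perm.inv_def, Fin.cycleRange_symm_succ]
  -- ρ is the sort of the face
  have hmono : Monotone (σ ∘ π) := Tuple.monotone_sort σ
  have hstab : ∀ a b : Fin (m + 2), a < b → σ (π a) = σ (π b) → π a < π b := by
    have := (Tuple.eq_sort_iff (f := σ) (σ := π)).1 hπ
    exact this.2
  have hρsort : ρ = Tuple.sort (σ ∘ j.succAbove) := by
    rw [Tuple.eq_sort_iff]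
    constructor
    · intro x y hxy
      show σ (j.succAbove (ρ x)) ≤ σ (j.succAbove (ρ y))
      rw [← hkey x, ← hkey y]
      exact hmono ((Fin.strictMono_succAbove i).monotone hxy)
    · intro x y hxy hval
      have hv : σ (π (i.succAbove x)) = σ (π (i.succAbove y)) := by
        simpa [hkey x, hkey y] using hval
      have hlt : π (i.succAbove x) < π (i.succAbove y) :=
        hstab _ _ ((Fin.strictMono_succAbove i) hxy) hv
      rw [hkey x, hkey y] at hlt
      exact (Fin.strictMono_succAbove j).lt_iff_lt.mp hlt
  constructor
  · funext x
    rw [← hρsort]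
    simpa [Function.comp] using (congrArg σ (hkey x)).symm
  · rw [← hρsort]
    have hsign' : Equiv.Perm.sign π' = Equiv.Perm.sign ρ := by
      rw [← hdec, hπ'0, Equiv.Perm.decomposeFin.symm_sign, if_pos rfl, one_mul]
    have hmul : π' * i.cycleRange = j.cycleRange * π := by rw [hπ']; group
    have hsgn := congrArg (fun u : Equiv.Perm (Fin (m + 2)) => ((Equiv.Perm.sign u : ℤˣ) : ℤ)) hmul
    simp only [map_mul, Fin.sign_cycleRange, Units.val_mul, Units.val_pow_eq_pow_val,
      Units.val_neg, Units.val_one] at hsgn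
    have collapse : ∀ (a : ℤ) (n : ℕ), a * (-1) ^ n * (-1) ^ n = a := by
      intro a n
      rw [mul_assoc, ← pow_add]
      simp [Even.neg_one_pow (⟨n, rfl⟩ : Even (n + n))]
    have : ((Equiv.Perm.sign ρ : ℤˣ) : ℤ) = (-1) ^ (j : ℕ) * ((Equiv.Perm.sign π : ℤˣ) : ℤ) * (-1) ^ ((i : Fin (m + 2)) : ℕ) := by
      rw [← hsign']
      have := collapse (((Equiv.Perm.sign π' : ℤˣ) : ℤ)) ((i : Fin (m + 2)) : ℕ)
      calc ((Equiv.Perm.sign π' : ℤˣ) : ℤ)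
          = ((Equiv.Perm.sign π' : ℤˣ) : ℤ) * (-1) ^ ((i : Fin (m + 2)) : ℕ) * (-1) ^ ((i : Fin (m + 2)) : ℕ) := (this).symm
        _ = (-1) ^ (j : ℕ) * ((Equiv.Perm.sign π : ℤˣ) : ℤ) * (-1) ^ ((i : Fin (m + 2)) : ℕ) := by rw [hsgn]
    rw [this]; ring


/-- `Phi` is a chain map -/
lemma Phi_bd (m : ℕ) (c : Ch N (m + 1)) :
    bd m (Phi (m + 1) c) = Phi m (bd m c) := by
  have : (bd (N := N) m).comp (Phi (m + 1)) = (Phi m).comp (bd m) := by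
    apply chain_ext
    intro σ
    simp only [LinearMap.comp_apply, Phi_sing, bd_sing, map_sum, map_smul, Phi_sing]
    set π := Tuple.sort σ with hπ
    set s : Tup N (m + 1) := σ ∘ π with hs
    have hmono : Monotone s := Tuple.monotone_sort σ
    -- left side
    have hL : bd m (PhiGen σ) =
        ((Equiv.Perm.sign π : ℤˣ) : ℤ) • ∑ i : Fin (m + 2), ((-1 : ℤ) ^ (i : ℕ)) • ZGen (s ∘ i.succAbove) := by
      rw [← bd_ZGen s hmono]
      rw [PhiGen, ZGen]
      by_cases hdup : HasAdjDup s
      · rw [if_pos hdup, if_pos hdup, map_zero, smul_zero]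
      · rw [if_neg hdup, if_neg hdup, map_smul]
    rw [hL]
    -- right side
    have hterm : ∀ j : Fin (m + 2),
        ((-1 : ℤ) ^ (j : ℕ)) • PhiGen (σ ∘ j.succAbove)
          = (((Equiv.Perm.sign π : ℤˣ) : ℤ) * ((-1 : ℤ) ^ ((π⁻¹ j : Fin (m + 2)) : ℕ))) •
              ZGen (s ∘ Fin.succAbove (π⁻¹ j)) := by
      intro j
      obtain ⟨hfac, hsgn⟩ := sort_face σ j
      rw [PhiGen, hfac, hsgn, ZGen]
      by_cases hdup : HasAdjDup ((σ ∘ π) ∘ Fin.succAbove (π⁻¹ j))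
      · rw [if_pos, if_pos hdup] <;> try exact hdup
        simp
      · rw [if_neg, if_neg hdup]
        · rw [smul_smul]
          congr 1
          have collapse : ((-1 : ℤ) ^ (j : ℕ)) * ((-1 : ℤ) ^ (j : ℕ)) = 1 := by
            rw [← pow_add]
            exact Even.neg_one_pow ⟨(j : ℕ), rfl⟩
          calc ((-1 : ℤ) ^ (j : ℕ)) * (((Equiv.Perm.sign (Tuple.sort σ) : ℤˣ) : ℤ) * (-1) ^ (j : ℕ) * (-1) ^ (((Tuple.sort σ)⁻¹ j : Fin (m + 2)) : ℕ))
              = ((-1 : ℤ) ^ (j : ℕ) * (-1) ^ (j : ℕ)) * (((Equiv.Perm.sign (Tuple.sort σ) : ℤˣ) : ℤ) * (-1) ^ (((Tuple.sort σ)⁻¹ j : Fin (m + 2)) : ℕ)) := by ring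
            _ = ((Equiv.Perm.sign π : ℤˣ) : ℤ) * ((-1 : ℤ) ^ ((π⁻¹ j : Fin (m + 2)) : ℕ)) := by rw [collapse]; rw [one_mul]
        · exact hdup
    -- hL already applied
    rw [Finset.smul_sum]
    simp_rw [smul_smul]
    rw [Finset.sum_congr rfl (fun j _ => hterm j)]
    exact (Equiv.sum_comp (π.symm) fun i => (((Equiv.Perm.sign π : ℤˣ) : ℤ) * ((-1 : ℤ) ^ ((i : Fin (m + 2)) : ℕ))) • ZGen (s ∘ Fin.succAbove i)).symm
  exact LinearMap.congr_fun this c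

/-! ### the contracting homotopy -/

lemma Phi_zero_gen (τ : Tup N 0) : PhiGen τ = sing τ := by
  rw [PhiGen, if_neg]
  · have hsort : Tuple.sort τ = 1 := Equiv.ext fun x => by omega
    rw [hsort]
    simp
  · rintro ⟨i, -⟩
    exact absurd i.isLt (by omega)

def hmap : ∀ m : ℕ, Ch N m →ₗ[ℤ] Ch N (m + 1)
  | 0 => 0
  | (m + 1) => clift fun σ =>
      cone (σ 0) (m + 1) (sing σ - PhiGen σ - hmap m (bd m (sing σ)))

lemma key : ∀ (m : ℕ) (c : Ch N (m + 1)),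
    bd (m + 1) (hmap (m + 1) c) = c - Phi (m + 1) c - hmap m (bd m c) := by
  intro m
  induction m with
  | zero =>
    intro c
    have h : (bd (N := N) 1).comp (hmap 1) =
        LinearMap.id - Phi 1 - (hmap 0).comp (bd 0) := by
      apply chain_ext
      intro σ
      simp only [LinearMap.comp_apply, LinearMap.sub_apply, LinearMap.id_apply, Phi_sing]
      show bd 1 (hmap 1 (sing σ)) = sing σ - PhiGen σ - hmap 0 (bd 0 (sing σ))
      have h1 : hmap 1 (sing σ) = cone (σ 0) 1 (sing σ - PhiGen σ - hmap 0 (bd 0 (sing σ))) := by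
        simp [hmap]
      rw [h1]
      rw [bd_cone]
      have h2 : bd 0 (sing σ - PhiGen σ - hmap 0 (bd 0 (sing σ))) = 0 := by
        have h3 : hmap (N := N) 0 = 0 := rfl
        rw [h3]
        simp only [LinearMap.zero_apply, sub_zero, map_sub]
        have h4 : bd 0 (PhiGen σ) = Phi 0 (bd 0 (sing σ)) := by
          rw [← Phi_sing, Phi_bd]
        have h5 : Phi (N := N) 0 = LinearMap.id := by
          apply chain_ext
          intro τ
          simp [Phi_zero_gen]
        rw [h4, h5]
        simp
      rw [h2]
      have h3 : hmap (N := N) 0 = 0 := rfl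
      rw [h3]
      simp
    exact LinearMap.congr_fun h c
  | succ m ih =>
    intro c
    have h : (bd (N := N) (m + 2)).comp (hmap (m + 2)) =
        LinearMap.id - Phi (m + 2) - (hmap (m + 1)).comp (bd (m + 1)) := by
      apply chain_ext
      intro σ
      simp only [LinearMap.comp_apply, LinearMap.sub_apply, LinearMap.id_apply, Phi_sing]
      show bd (m + 2) (hmap (m + 2) (sing σ))
          = sing σ - PhiGen σ - hmap (m + 1) (bd (m + 1) (sing σ))
      have h1 : hmap (m + 2) (sing σ)
          = cone (σ 0) (m + 2) (sing σ - PhiGen σ - hmap (m + 1) (bd (m + 1) (sing σ))) := by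
        simp [hmap]
      rw [h1, bd_cone]
      have h2 : bd (m + 1) (sing σ - PhiGen σ - hmap (m + 1) (bd (m + 1) (sing σ))) = 0 := by
        rw [map_sub, map_sub]
        have h4 : bd (m + 1) (PhiGen σ) = Phi (m + 1) (bd (m + 1) (sing σ)) := by
          rw [← Phi_sing, Phi_bd]
        rw [h4, ih (bd (m + 1) (sing σ))]
        rw [bd_bd]
        simp
      rw [h2]
      simp
    exact LinearMap.congr_fun h c

/-! ### support control -/

def SuppIn {m : ℕ} (R : Set (Fin N)) (c : Ch N m) : Prop :=
  ∀ τ ∈ c.support, Set.range τ ⊆ R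

lemma suppIn_zero {m : ℕ} (R : Set (Fin N)) : SuppIn R (0 : Ch N m) := by
  intro τ hτ; simp at hτ

lemma suppIn_mono {m : ℕ} {R R' : Set (Fin N)} (h : R ⊆ R') {c : Ch N m}
    (hc : SuppIn R c) : SuppIn R' c := fun τ hτ => (hc τ hτ).trans h

lemma suppIn_sing {m : ℕ} {R : Set (Fin N)} {τ : Tup N m} (h : Set.range τ ⊆ R) :
    SuppIn R (sing τ) := by
  intro τ' hτ'
  have := Finsupp.support_single_subset hτ'
  simp only [Finset.mem_singleton] at this
  rwa [this]

lemma suppIn_add {m : ℕ} {R : Set (Fin N)} {c d : Ch N m} (hc : SuppIn R c)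
    (hd : SuppIn R d) : SuppIn R (c + d) := by
  intro τ hτ
  rcases Finset.mem_union.1 (Finsupp.support_add hτ) with h | h
  exacts [hc τ h, hd τ h]

lemma suppIn_sub {m : ℕ} {R : Set (Fin N)} {c d : Ch N m} (hc : SuppIn R c)
    (hd : SuppIn R d) : SuppIn R (c - d) := by
  intro τ hτ
  rcases Finset.mem_union.1 (Finsupp.support_sub hτ) with h | h
  exacts [hc τ h, hd τ h]

lemma suppIn_smul {m : ℕ} {R : Set (Fin N)} {c : Ch N m} (n : ℤ) (hc : SuppIn R c) :
    SuppIn R (n • c) := fun τ hτ => hc τ (Finsupp.support_smul hτ)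

lemma suppIn_finset_sum {m : ℕ} {R : Set (Fin N)} {ι : Type*} (s : Finset ι)
    (f : ι → Ch N m) (h : ∀ i ∈ s, SuppIn R (f i)) : SuppIn R (∑ i ∈ s, f i) := by
  classical
  induction s using Finset.induction_on with
  | empty => simpa using suppIn_zero R
  | insert _ _ hnotmem ih =>
    rw [Finset.sum_insert hnotmem]
    exact suppIn_add (h _ (Finset.mem_insert_self _ _))
      (ih fun i hi => h i (Finset.mem_insert_of_mem hi))

lemma suppIn_clift {m m' : ℕ} {R : Set (Fin N)} (φ : Tup N m → Ch N m') (c : Ch N m)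
    (hφ : ∀ τ ∈ c.support, SuppIn R (φ τ)) : SuppIn R (clift φ c) := by
  intro τ' hτ'
  have h1 : (clift φ c) = c.sum fun x r => r • φ x := by
    simp [clift, Finsupp.lift_apply]
  rw [h1] at hτ'
  have h2 := Finsupp.support_sum hτ'
  rcases Finset.mem_biUnion.1 h2 with ⟨x, hx, hmem⟩
  exact hφ x hx τ' (Finsupp.support_smul hmem)

lemma suppIn_bd {m : ℕ} {R : Set (Fin N)} {c : Ch N (m + 1)} (hc : SuppIn R c) :
    SuppIn R (bd m c) := by
  refine suppIn_clift _ _ fun σ hσ => ?_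
  refine suppIn_finset_sum _ _ fun j _ => ?_
  refine suppIn_smul _ (suppIn_sing ?_)
  exact (Set.range_comp_subset_range _ σ).trans (hc σ hσ)

lemma suppIn_PhiGen {m : ℕ} (σ : Tup N m) : SuppIn (Set.range σ) (PhiGen σ) := by
  rw [PhiGen]
  split_ifs with h
  · exact suppIn_zero _
  · exact suppIn_smul _ (suppIn_sing (Set.range_comp_subset_range _ σ))

lemma suppIn_cone {m : ℕ} {R : Set (Fin N)} (v : Fin N) (hv : v ∈ R) {c : Ch N m}
    (hc : SuppIn R c) : SuppIn R (cone v m c) := by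
  refine suppIn_clift _ _ fun τ hτ => suppIn_sing ?_
  rw [Fin.range_cons]
  exact Set.insert_subset hv (hc τ hτ)

lemma suppIn_hmap : ∀ (m : ℕ) {R : Set (Fin N)} (c : Ch N m),
    SuppIn R c → SuppIn R (hmap m c) := by
  intro m
  induction m with
  | zero =>
    intro R c _
    have : hmap (N := N) 0 = 0 := rfl
    rw [this]
    exact suppIn_zero R
  | succ m ih =>
    intro R c hc
    show SuppIn R (clift (fun σ =>
      cone (σ 0) (m + 1) (sing σ - PhiGen σ - hmap m (bd m (sing σ)))) c)
    refine suppIn_clift _ _ fun σ hσ => ?_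
    have hrange : Set.range σ ⊆ R := hc σ hσ
    refine suppIn_mono hrange (suppIn_cone (σ 0) (Set.mem_range_self 0) ?_)
    refine suppIn_sub (suppIn_sub (suppIn_sing subset_rfl) (suppIn_PhiGen σ)) ?_
    exact ih _ (suppIn_bd (suppIn_sing subset_rfl))

/-! ### nerve of a family of sets -/

section Nerve

variable {Y : Type}

def Good (W : Fin N → Set Y) {m : ℕ} (τ : Tup N m) : Prop := (⋂ j, W (τ j)).Nonempty

lemma good_mono {W : Fin N → Set Y} {m m' : ℕ} {τ : Tup N m} {τ' : Tup N m'}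
    (h : Set.range τ' ⊆ Set.range τ) (hτ : Good W τ) : Good W τ' := by
  obtain ⟨x, hx⟩ := hτ
  refine ⟨x, Set.mem_iInter.2 fun j => ?_⟩
  obtain ⟨i, hi⟩ := h ⟨j, rfl⟩
  rw [← hi]
  exact Set.mem_iInter.1 hx i

lemma good_face {W : Fin N → Set Y} {m : ℕ} {σ : Tup N (m + 1)} (hσ : Good W σ)
    (j : Fin (m + 2)) : Good W (σ ∘ j.succAbove) :=
  good_mono (Set.range_comp_subset_range _ σ) hσ

theorem exists_primitive (W : Fin N → Set Y) (K : ℕ) (G : Type) [AddCommGroup G]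
    (hsmall : ∀ σ : Tup N (K + 1), Good W σ → ¬ Function.Injective σ)
    (F : {σ : Tup N (K + 1) // Good W σ} → G)
    (hF : ∀ (σ : Tup N (K + 2)) (hσ : Good W σ),
      ∑ j : Fin (K + 3), (-1 : ℤ) ^ (j : ℕ) • F ⟨σ ∘ j.succAbove, good_face hσ j⟩ = 0) :
    ∃ g : {σ : Tup N K // Good W σ} → G, ∀ (σ : Tup N (K + 1)) (hσ : Good W σ),
      ∑ j : Fin (K + 2), (-1 : ℤ) ^ (j : ℕ) • g ⟨σ ∘ j.succAbove, good_face hσ j⟩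
        = F ⟨σ, hσ⟩ := by
  classical
  set fext : Tup N (K + 1) → G := fun τ => if h : Good W τ then F ⟨τ, h⟩ else 0 with hfext
  set pairF : Ch N (K + 1) →ₗ[ℤ] G := Finsupp.lift G ℤ _ fext with hpairF
  have pair_sing : ∀ τ : Tup N (K + 1), pairF (sing τ) = fext τ := by
    intro τ
    simp [hpairF, sing, Finsupp.lift_apply, Finsupp.sum_single_index]
  have pair_bd_zero : ∀ c : Ch N (K + 2), (∀ τ ∈ c.support, Good W τ) →
      pairF (bd (K + 1) c) = 0 := by
    intro c hgood
    have hdecomp : c = ∑ τ ∈ c.support, (c τ) • sing τ := by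
      conv_lhs => rw [← Finsupp.sum_single c]
      rw [Finsupp.sum]
      refine Finset.sum_congr rfl fun τ _ => ?_
      rw [sing, Finsupp.smul_single, smul_eq_mul, mul_one]
    rw [hdecomp, map_sum, map_sum]
    refine Finset.sum_eq_zero fun τ hτ => ?_
    rw [map_smul, map_smul]
    have hbds : pairF (bd (K + 1) (sing τ)) = 0 := by
      rw [bd_sing, map_sum]
      have hτg := hgood τ hτ
      have : ∀ j : Fin (K + 3), pairF ((-1 : ℤ) ^ (j : ℕ) • sing (τ ∘ j.succAbove))
          = (-1 : ℤ) ^ (j : ℕ) • F ⟨τ ∘ j.succAbove, good_face hτg j⟩ := by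
        intro j
        rw [map_smul, pair_sing]
        congr 1
        exact dif_pos (good_face hτg j)
      rw [Finset.sum_congr rfl fun j _ => this j]
      exact hF τ hτg
    rw [hbds, smul_zero]
  refine ⟨fun τ => pairF (hmap K (sing τ.1)), ?_⟩
  intro σ hσ
  have h1 : ∑ j : Fin (K + 2), (-1 : ℤ) ^ (j : ℕ) •
        pairF (hmap K (sing ((σ ∘ j.succAbove : Tup N K))))
      = pairF (hmap K (bd K (sing σ))) := by
    rw [bd_sing, map_sum, map_sum]
    refine Finset.sum_congr rfl fun j _ => ?_
    rw [map_smul, map_smul]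
  rw [h1]
  have h2 : hmap K (bd K (sing σ)) =
      sing σ - Phi (K + 1) (sing σ) - bd (K + 1) (hmap (K + 1) (sing σ)) := by
    have hk := key K (sing σ)
    rw [sub_sub, eq_sub_iff_add_eq] at hk ⊢
    have hsw : (hmap K) ((bd K) (sing σ)) +
          ((Phi (K + 1)) (sing σ) + (bd (K + 1)) ((hmap (K + 1)) (sing σ)))
        = (bd (K + 1)) ((hmap (K + 1)) (sing σ)) +
          ((Phi (K + 1)) (sing σ) + (hmap K) ((bd K) (sing σ))) := by abel
    rw [hsw]
    exact hk
  rw [h2, map_sub, map_sub]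
  have h3 : pairF (sing σ) = F ⟨σ, hσ⟩ := by
    rw [pair_sing]
    exact dif_pos hσ
  have h4 : Phi (K + 1) (sing σ) = 0 := by
    rw [Phi_sing, PhiGen, if_pos]
    refine hasAdjDup_of_mono_not_inj (Tuple.monotone_sort σ) ?_
    intro hinj
    refine hsmall σ hσ ?_
    intro x y hxy
    have e := Tuple.sort σ
    have hx : σ (Tuple.sort σ ((Tuple.sort σ)⁻¹ x)) = σ (Tuple.sort σ ((Tuple.sort σ)⁻¹ y)) := by
      simp only [← Equiv.Perm.mul_apply, mul_inv_cancel, Equiv.Perm.one_apply]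
      exact hxy
    have := hinj hx
    have := congrArg (Tuple.sort σ) this
    simpa using this
  rw [h3, h4, map_zero]
  have h5 : pairF (bd (K + 1) (hmap (K + 1) (sing σ))) = 0 := by
    refine pair_bd_zero _ fun τ hτ => ?_
    have hsupp := suppIn_hmap (K + 1) (sing σ) (suppIn_sing subset_rfl) τ hτ
    exact good_mono hsupp hσ
  rw [h5]
  abel

end Nerve

end
section Outer

variable {X : Type} [TopologicalSpace X]

lemma cechCoboundary_restrict {𝒰 𝒱 : OpenCover X} (r : 𝒱.ι → 𝒰.ι)
    (hr : ∀ j, 𝒱.U j ⊆ 𝒰.U (r j)) (G : Type) [AddCommGroup G] (n : ℕ)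
    (f : CechCochain 𝒰 G n) :
    cechCoboundary 𝒱 G n (cechRestrict r hr G n f)
      = cechRestrict r hr G (n + 1) (cechCoboundary 𝒰 G n f) := rfl

lemma cechCoboundary_zero (𝒰 : OpenCover X) (G : Type) [AddCommGroup G] (n : ℕ) :
    cechCoboundary 𝒰 G n (0 : CechCochain 𝒰 G n) = 0 := by
  funext σ
  show (∑ j : Fin (n + 2), (-1 : ℤ) ^ (j : ℕ) • (0 : G)) = 0
  simp

end Outer

end Stmt16
/-- Let `X` be a compact Hausdorff space. If the Čech cohomology group
`Ȟᵏ(X; G)` is nonzero (i.e. nontrivial) for some abelian group `G` and some `k ≥ 0`, then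
the covering dimension of `X` is at least `k`, i.e. `X` has covering dimension `≤ n` only
for `n ≥ k`. -/
theorem stmt_16 (X : Type) [TopologicalSpace X] [CompactSpace X] [T2Space X]
    (G : Type) [AddCommGroup G] (k : ℕ) (h : Nontrivial (CechCohomology X G k)) :
    ∀ n : ℕ, CovDimLE X n → k ≤ n := by
  classical
  intro n hdim
  by_contra hk
  push_neg at hk
  obtain ⟨K, rfl⟩ : ∃ K, k = K + 1 := ⟨k - 1, by omega⟩
  have hnK : n ≤ K := by omega
  -- the trivial cover and the zero cocycle on it
  set 𝒰₀ : OpenCover X := ⟨PUnit, fun _ => Set.univ, fun _ => isOpen_univ,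
    fun _ => ⟨PUnit.unit, trivial⟩⟩ with h𝒰₀
  set base : Σ 𝒰 : OpenCover X,
      {f : CechCochain 𝒰 G (K + 1) // cechCoboundary 𝒰 G (K + 1) f = 0} :=
    ⟨𝒰₀, 0, Stmt16.cechCoboundary_zero 𝒰₀ G (K + 1)⟩ with hbase
  -- every cocycle is related to the base point
  have hrel : ∀ a : Σ 𝒰 : OpenCover X,
      {f : CechCochain 𝒰 G (K + 1) // cechCoboundary 𝒰 G (K + 1) f = 0},
      ∃ (𝒲 : OpenCover X) (r : 𝒲.ι → a.1.ι) (hr : ∀ j, 𝒲.U j ⊆ a.1.U (r j))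
        (s : 𝒲.ι → base.1.ι) (hs : ∀ j, 𝒲.U j ⊆ base.1.U (s j)),
        IsCechCoboundary 𝒲 G (K + 1)
          (cechRestrict r hr G (K + 1) a.2.1 - cechRestrict s hs G (K + 1) base.2.1) := by
    intro a
    -- extract a finite subcover
    obtain ⟨t, ht⟩ := IsCompact.elim_finite_subcover (isCompact_univ (X := X)) a.1.U
      a.1.isOpen (fun x _ => by
        rcases a.1.covers x with ⟨i, hi⟩
        exact Set.mem_iUnion.2 ⟨i, hi⟩)
    -- apply the covering dimension hypothesis
    obtain ⟨κ, V, hκfin, hVopen, hVcov, hVref, hmult⟩ :=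
      hdim {i // i ∈ t} (fun i => a.1.U i.1) inferInstance (fun i => a.1.isOpen i.1)
        (fun x => by
          rcases Set.mem_iUnion₂.1 (ht (Set.mem_univ x)) with ⟨i, hit, hx⟩
          exact ⟨⟨i, hit⟩, hx⟩)
    obtain ⟨N, ⟨e⟩⟩ := Finite.exists_equiv_fin κ
    set W : Fin N → Set X := fun j => V (e.symm j) with hW
    set 𝒲 : OpenCover X := ⟨Fin N, W, fun j => hVopen _, fun x => by
      rcases hVcov x with ⟨j, hj⟩
      exact ⟨e j, by simpa [hW] using hj⟩⟩ with h𝒲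
    set r : 𝒲.ι → a.1.ι := fun j => ((hVref (e.symm j)).choose).1 with hrdef
    have hr : ∀ j, 𝒲.U j ⊆ a.1.U (r j) := fun j => (hVref (e.symm j)).choose_spec
    set s : 𝒲.ι → base.1.ι := fun _ => PUnit.unit with hsdef
    have hs : ∀ j, 𝒲.U j ⊆ base.1.U (s j) := fun j x _ => trivial
    refine ⟨𝒲, r, hr, s, hs, ?_⟩
    -- the restricted cocycle
    set F : CechCochain 𝒲 G (K + 1) := cechRestrict r hr G (K + 1) a.2.1 with hF
    have hFz : cechRestrict s hs G (K + 1) base.2.1 = 0 := rfl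
    rw [hFz, sub_zero]
    have hδF : cechCoboundary 𝒲 G (K + 1) F = 0 := by
      rw [hF, Stmt16.cechCoboundary_restrict, a.2.2]
      rfl
    -- multiplicy bound: no injective (K+2)-tuple is good
    have hsmall : ∀ σ : Stmt16.Tup N (K + 1), Stmt16.Good W σ → ¬ Function.Injective σ := by
      intro σ hσ hinj
      obtain ⟨x, hx⟩ := hσ
      have hsub : Set.range σ ⊆ {i : Fin N | x ∈ W i} := by
        rintro - ⟨j, rfl⟩
        exact Set.mem_iInter.1 hx j
      have hcard1 : (Set.range σ).ncard = K + 2 := by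
        rw [← Set.image_univ, Set.ncard_image_of_injective _ hinj, Set.ncard_univ,
          Nat.card_eq_fintype_card, Fintype.card_fin]
      have hcard2 : {i : Fin N | x ∈ W i}.ncard ≤ n + 1 := by
        have himg : {i : Fin N | x ∈ W i} = e '' {j : κ | x ∈ V j} := by
          ext i
          simp only [Set.mem_setOf_eq, Set.mem_image, hW]
          constructor
          · intro hi
            exact ⟨e.symm i, hi, by simp⟩
          · rintro ⟨j, hj, rfl⟩
            simpa using hj
        rw [himg, Set.ncard_image_of_injective _ e.injective]
        exact hmult x
      have := (hcard1 ▸ Set.ncard_le_ncard hsub (Set.toFinite _))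
      omega
    -- the cocycle as a function on good tuples
    have hFgood : ∀ (σ : Stmt16.Tup N (K + 2)) (hσ : Stmt16.Good W σ),
        ∑ j : Fin (K + 3), (-1 : ℤ) ^ (j : ℕ) •
          (F : {σ : Stmt16.Tup N (K + 1) // Stmt16.Good W σ} → G)
            ⟨σ ∘ j.succAbove, Stmt16.good_face hσ j⟩ = 0 := by
      intro σ hσ
      exact congrFun hδF ⟨σ, hσ⟩
    obtain ⟨g, hg⟩ := Stmt16.exists_primitive W K G hsmall
      (F : {σ : Stmt16.Tup N (K + 1) // Stmt16.Good W σ} → G) hFgood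
    refine ⟨(g : CechCochain 𝒲 G K), ?_⟩
    funext σ
    exact hg σ.1 σ.2
  -- hence the cohomology is a subsingleton
  obtain ⟨x, y, hxy⟩ := h
  refine hxy ?_
  have hq : ∀ z : CechCohomology X G (K + 1), z = Quot.mk _ base := by
    intro z
    induction z using Quot.ind with
    | mk a => exact Quot.sound (hrel a)
  rw [hq x, hq y]
end
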